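/- Let γ be a limit ordinal (or 0) and ⟨n_i : i ∈ I⟩ a sequence of natural numbers with γ + n_i > 0 for all i. The disjoint union poset ⋃_{i∈I} (γ + n_i) is reversible if and only if the set I_γ = {i ∈ I : n_i = 0} is finite and ⟨n_i : i ∈ I \ I_γ⟩ is a reversible sequence of natural numbers. -/

import Mathlib

/-- A poset is reversible iff every bijective homomorphism (monotone bijection) of it to
itself is an automorphism (i.e. its inverse is also monotone). -/
def Reversible (P : Type*) [PartialOrder P] : Prop :=
  ∀ f : P → P, Function.Bijective f → Monotone f → ∀ x y : P, f x ≤ f y → x ≤ y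

/-- A sequence of (positive) natural numbers is reversible iff there is no non-injective
surjection f : I → I such that for all j, the sum of n_i over the fiber f⁻¹[{j}] equals n_j. -/
def RevSeqNat {I : Type*} (n : I → ℕ) : Prop :=
  ¬ ∃ f : I → I, Function.Surjective f ∧ ¬ Function.Injective f ∧
      ∀ j, ∑ᶠ i ∈ f ⁻¹' {j}, n i = n j

open Ordinal Set Function

/-! ### Ordinal auxiliary lemmas -/

lemma limit_add_nat_lt {γ a : Ordinal} (hγ : Order.IsSuccLimit γ) (h : a < γ) (m : ℕ) : a + m < γ := by
  induction m with
  | zero => simpa using h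
  | succ k ih =>
      have : a + (k+1 : ℕ) = (a + k) + 1 := by
        push_cast; rw [add_assoc]
      rw [this, Ordinal.add_one_eq_succ]
      exact hγ.succ_lt ih

lemma decomp_lt {q q' r r' : Ordinal} (hr : r < ω) (h : q < q') :
    ω * q + r < ω * q' + r' := by
  have h1 : ω * q + r < ω * q + ω := by rwa [add_lt_add_iff_left]
  have h2 : ω * q + ω = ω * (Order.succ q) := (Ordinal.mul_succ ω q).symm
  have h3 : ω * (Order.succ q) ≤ ω * q' := by
    exact mul_le_mul_right (Order.succ_le_of_lt h) ω
  calc ω * q + r < ω * (Order.succ q) := h2 ▸ h1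
    _ ≤ ω * q' := h3
    _ ≤ ω * q' + r' := le_self_add

lemma decomp_unique {q q' r r' : Ordinal} (hr : r < ω) (hr' : r' < ω)
    (h : ω * q + r = ω * q' + r') : q = q' ∧ r = r' := by
  rcases lt_trichotomy q q' with hq | hq | hq
  · exact absurd h (ne_of_lt (decomp_lt hr hq))
  · subst hq
    exact ⟨rfl, (add_right_inj _).1 h⟩
  · exact absurd h.symm (ne_of_lt (decomp_lt hr' hq))

lemma decomp_le {q q' r r' : Ordinal} (hr : r < ω) (hr' : r' < ω)
    (h : ω * q + r ≤ ω * q' + r') : q < q' ∨ (q = q' ∧ r ≤ r') := by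
  rcases lt_trichotomy q q' with hq | hq | hq
  · exact Or.inl hq
  · subst hq
    exact Or.inr ⟨rfl, (add_le_add_iff_left _).1 h⟩
  · exact absurd (decomp_lt hr' hq) (not_lt.2 h)

lemma decomp_lt_cases {q q' r r' : Ordinal} (hr : r < ω) (hr' : r' < ω)
    (h : ω * q + r < ω * q' + r') : q < q' ∨ (q = q' ∧ r < r') := by
  rcases lt_trichotomy q q' with hq | hq | hq
  · exact Or.inl hq
  · subst hq
    exact Or.inr ⟨rfl, (add_lt_add_iff_left _).1 h⟩
  · exact absurd (decomp_lt hr' hq) (not_lt.2 (le_of_lt h))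

lemma div_mod_spec {x q : Ordinal} {r : Ordinal} (hr : r < ω) (h : x = ω * q + r) :
    x / ω = q ∧ x % ω = r := by
  have h0 : ω * (x / ω) + x % ω = x := Ordinal.div_add_mod x ω
  have hm : x % ω < ω := Ordinal.mod_lt x Ordinal.omega0_ne_zero
  have := decomp_unique hm hr (h0.trans h)
  exact this

/-- decompose an element of `[γ, γ+n)` -/
lemma top_decomp {γ x : Ordinal} {m : ℕ} (h1 : γ ≤ x) (h2 : x < γ + m) :
    ∃ t : ℕ, t < m ∧ x = γ + t := by
  have hsub : γ + (x - γ) = x := Ordinal.add_sub_cancel_of_le h1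
  have hlt : x - γ < m := by
    apply Ordinal.sub_lt_of_lt_add h2
    have : (0:Ordinal) < m := by
      rcases Nat.eq_zero_or_pos m with hm | hm
      · exfalso; rw [hm] at h2; simp at h2; exact absurd (lt_of_le_of_lt h1 h2) (lt_irrefl _)
      · exact_mod_cast hm
    exact this
  have hω : x - γ < ω := lt_of_lt_of_le hlt (le_of_lt (Ordinal.nat_lt_omega0 m))
  obtain ⟨t, ht⟩ := Ordinal.lt_omega0.1 hω
  refine ⟨t, ?_, by rw [← ht, hsub]⟩
  rw [ht] at hlt
  exact_mod_cast hlt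

/-! ### Sigma order lemmas -/

section SigmaOrder
variable {I : Type*} {α : I → Type*} [∀ i, PartialOrder (α i)]

lemma sigma_le_fst {a b : Σ i, α i} (h : a ≤ b) : a.1 = b.1 := by
  obtain ⟨h1, -⟩ := Sigma.le_def.1 h; exact h1

lemma sigma_mk_le_mk {i : I} {a b : α i} (h : (⟨i, a⟩ : Σ i, α i) ≤ ⟨i, b⟩) : a ≤ b :=
  Sigma.mk_le_mk_iff.1 h

end SigmaOrder

section SigmaVal
variable {I : Type*} {o : I → Ordinal}

/-- value of the second coordinate, for sigmas of initial segments -/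
def sval (a : Σ i, ↥(Iio (o i))) : Ordinal := a.2.1

lemma sval_le {a b : Σ i, ↥(Iio (o i))} (h : a ≤ b) : sval a ≤ sval b := by
  obtain ⟨i, x⟩ := a
  obtain ⟨j, y⟩ := b
  obtain ⟨h1, h2⟩ := Sigma.le_def.1 h
  dsimp at h1; subst h1
  exact h2

lemma sigma_ext_val {a b : Σ i, ↥(Iio (o i))} (h1 : a.1 = b.1) (h2 : sval a = sval b) :
    a = b := by
  obtain ⟨i, x⟩ := a
  obtain ⟨j, y⟩ := b
  dsimp at h1; subst h1
  simp only [Sigma.mk.inj_iff, heq_eq_eq]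
  exact ⟨trivial, Subtype.ext h2⟩

lemma sigma_le_of_val {I : Type*} {o : I → Ordinal} {a b : Σ i, ↥(Iio (o i))}
    (h1 : a.1 = b.1) (h2 : sval a ≤ sval b) : a ≤ b := by
  obtain ⟨i, x⟩ := a
  obtain ⟨j, y⟩ := b
  dsimp at h1; subst h1
  exact Sigma.mk_le_mk_iff.2 h2

end SigmaVal

/-! ### Reversibility transport -/

lemma reversible_of_orderIso {P Q : Type*} [PartialOrder P] [PartialOrder Q]
    (e : P ≃o Q) (hP : Reversible P) : Reversible Q := by
  intro f hbij hmono x y hle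
  have key := hP (fun p => e.symm (f (e p)))
    (e.symm.bijective.comp (hbij.comp e.bijective))
    (fun a b hab => e.symm.monotone (hmono (e.monotone hab)))
    (e.symm x) (e.symm y)
  have h1 : e.symm (f (e (e.symm x))) ≤ e.symm (f (e (e.symm y))) := by
    simp only [OrderIso.apply_symm_apply]
    exact e.symm.monotone hle
  exact e.symm.le_iff_le.1 (key h1)

/-- order isomorphism between sigma types from componentwise isos -/
def sigmaOrderIso {I : Type*} {α β : I → Type*} [∀ i, PartialOrder (α i)]
    [∀ i, PartialOrder (β i)] (e : ∀ i, α i ≃o β i) :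
    (Σ i, α i) ≃o (Σ i, β i) where
  toFun a := ⟨a.1, e a.1 a.2⟩
  invFun b := ⟨b.1, (e b.1).symm b.2⟩
  left_inv a := by cases a; simp
  right_inv b := by cases b; simp
  map_rel_iff' := by
    rintro ⟨i, a⟩ ⟨j, b⟩
    constructor
    · rintro h
      obtain ⟨h1, h2⟩ := Sigma.le_def.1 h
      dsimp at h1; subst h1
      dsimp at h2
      exact Sigma.mk_le_mk_iff.2 ((e i).le_iff_le.1 (by exact_mod_cast h2))
    · rintro h
      obtain ⟨h1, h2⟩ := Sigma.le_def.1 h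
      dsimp at h1; subst h1
      exact Sigma.mk_le_mk_iff.2 ((e i).monotone (Sigma.mk_le_mk_iff.1 h))
section Construction

variable {I : Type*} {γ : Ordinal} {n : I → ℕ} {g : I → I}

variable (n g) in
/-- fibers of `g` as finsets -/
noncomputable def Ffin (hfib : ∀ j, (g ⁻¹' {j}).Finite) (j : I) : Finset I :=
  (hfib j).toFinset

variable (g) in
lemma mem_Ffin {hfib : ∀ j, (g ⁻¹' {j}).Finite} {i j : I} :
    i ∈ Ffin g hfib j ↔ g i = j := by
  simp [Ffin]

variable (n g) in
noncomputable def kk (hfib : ∀ j, (g ⁻¹' {j}).Finite) (j : I) : ℕ :=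
  (Ffin g hfib j).card

open scoped Classical in
variable (n g) in
noncomputable def cidx (hfib : ∀ j, (g ⁻¹' {j}).Finite) (j i : I) : ℕ :=
  if h : i ∈ Ffin g hfib j then ((Ffin g hfib j).equivFin ⟨i, h⟩).val else 0

open scoped Classical in
variable (n g) in
noncomputable def NN (hfib : ∀ j, (g ⁻¹' {j}).Finite) (j : I) (c : ℕ) : ℕ :=
  if h : c < kk g hfib j then n (((Ffin g hfib j).equivFin.symm ⟨c, h⟩) : I) else 0

variable (n g) in
noncomputable def off (hfib : ∀ j, (g ⁻¹' {j}).Finite) (j : I) (c : ℕ) : ℕ :=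
  ∑ c' ∈ Finset.range c, NN n g hfib j c'

variable {hfib : ∀ j, (g ⁻¹' {j}).Finite} {i i' j : I}

lemma cidx_lt (h : i ∈ Ffin g hfib j) : cidx g hfib j i < kk g hfib j := by
  rw [cidx, dif_pos h]
  exact ((Ffin g hfib j).equivFin ⟨i, h⟩).2

lemma cidx_inj (h : i ∈ Ffin g hfib j) (h' : i' ∈ Ffin g hfib j)
    (he : cidx g hfib j i = cidx g hfib j i') : i = i' := by
  simp only [cidx, dif_pos h, dif_pos h'] at he
  have := (Ffin g hfib j).equivFin.injective (Fin.val_injective he)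
  exact congrArg Subtype.val this

lemma NN_cidx (h : i ∈ Ffin g hfib j) : NN n g hfib j (cidx g hfib j i) = n i := by
  have hc := cidx_lt h
  rw [NN, dif_pos hc]
  have h1 : (⟨cidx g hfib j i, hc⟩ : Fin (kk g hfib j)) = (Ffin g hfib j).equivFin ⟨i, h⟩ := by
    apply Fin.val_injective
    simp [cidx, dif_pos h]
  have h2 : (Ffin g hfib j).equivFin.symm ⟨cidx g hfib j i, hc⟩ = ⟨i, h⟩ := by
    rw [Equiv.symm_apply_eq]; exact h1
  rw [h2]

lemma cidx_surj {c : ℕ} (hc : c < kk g hfib j) :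
    ∃ i, ∃ h : i ∈ Ffin g hfib j, cidx g hfib j i = c := by
  set x := (Ffin g hfib j).equivFin.symm ⟨c, hc⟩ with hx
  refine ⟨x.1, x.2, ?_⟩
  rw [cidx, dif_pos x.2]
  have h1 : (⟨x.1, x.2⟩ : {y // y ∈ Ffin g hfib j}) = x := rfl
  rw [h1, hx, Equiv.apply_symm_apply]

lemma off_succ (c : ℕ) : off n g hfib j (c+1) = off n g hfib j c + NN n g hfib j c :=
  Finset.sum_range_succ _ c

lemma off_mono {c c' : ℕ} (h : c ≤ c') : off n g hfib j c ≤ off n g hfib j c' :=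
  Finset.sum_le_sum_of_subset (Finset.range_subset_range.2 h)

lemma off_total (hsum : ∑ᶠ i ∈ g ⁻¹' {j}, n i = n j) :
    off n g hfib j (kk g hfib j) = n j := by
  rw [off]
  have h1 : ∑ c' ∈ Finset.range (kk g hfib j), NN n g hfib j c'
      = ∑ c : Fin (kk g hfib j), NN n g hfib j c.val := by
    rw [Fin.sum_univ_eq_sum_range]
  rw [h1]
  have h2 : ∀ c : Fin (kk g hfib j), NN n g hfib j c.val
      = n (((Ffin g hfib j).equivFin.symm c : _) : I) := by
    intro c
    rw [NN, dif_pos c.2]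
    rfl
  rw [Finset.sum_congr rfl (fun c _ => h2 c)]
  calc ∑ c : Fin (kk g hfib j), n (((Ffin g hfib j).equivFin.symm c : _) : I)
      = ∑ x : {x // x ∈ Ffin g hfib j}, n (x : I) :=
        Equiv.sum_comp ((Ffin g hfib j).equivFin.symm) (fun x => n (x : I))
    _ = ∑ x ∈ Ffin g hfib j, n x := Finset.sum_coe_sort _ _
    _ = n j := by rw [← hsum, finsum_mem_eq_finite_toFinset_sum _ (hfib j)]; rfl

lemma off_add_le (h : i ∈ Ffin g hfib j) (hsum : ∑ᶠ i ∈ g ⁻¹' {j}, n i = n j) :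
    off n g hfib j (cidx g hfib j i) + n i ≤ n j :=
  calc off n g hfib j (cidx g hfib j i) + n i
      = off n g hfib j (cidx g hfib j i + 1) := by rw [off_succ, NN_cidx (n := n) h]
    _ ≤ off n g hfib j (kk g hfib j) := off_mono (Nat.succ_le_of_lt (cidx_lt h))
    _ = n j := off_total hsum

lemma exists_off {b : ℕ} : ∀ k, b < off n g hfib j k →
    ∃ c < k, off n g hfib j c ≤ b ∧ b < off n g hfib j c + NN n g hfib j c := by
  intro k
  induction k with
  | zero => intro h; simp [off] at h
  | succ k ih =>
      intro h
      by_cases hb : b < off n g hfib j k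
      · obtain ⟨c, hc, h1, h2⟩ := ih hb
        exact ⟨c, Nat.lt_succ_of_lt hc, h1, h2⟩
      · push_neg at hb
        rw [off_succ] at h
        exact ⟨k, Nat.lt_succ_self k, hb, h⟩

lemma interval_disj {c c' b : ℕ} (hcc : c ≠ c')
    (h1 : off n g hfib j c ≤ b) (h2 : b < off n g hfib j c + NN n g hfib j c)
    (h1' : off n g hfib j c' ≤ b) (h2' : b < off n g hfib j c' + NN n g hfib j c') : False := by
  rcases Nat.lt_or_ge c c' with h | h
  · have : off n g hfib j (c+1) ≤ off n g hfib j c' := off_mono h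
    rw [off_succ] at this
    omega
  · have hlt : c' < c := lt_of_le_of_ne h (Ne.symm hcc)
    have : off n g hfib j (c'+1) ≤ off n g hfib j c := off_mono hlt
    rw [off_succ] at this
    omega

end Construction
section Eval

variable {I : Type*} {γ : Ordinal} {n : I → ℕ} {g : I → I}

lemma isLimit_of_lt {γ x : Ordinal} (hγ : γ = 0 ∨ Order.IsSuccLimit γ) (hx : x < γ) : Order.IsSuccLimit γ := by
  rcases hγ with h | h
  · subst h; exact absurd hx (not_lt_zero (a := x))
  · exact h

open scoped Classical in
variable (γ n g) in
noncomputable def emap (hfib : ∀ j, (g ⁻¹' {j}).Finite) (i : I) (x : Ordinal) : Ordinal :=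
  if x < γ then
    ω * (x / ω) + ((kk g hfib (g i) : Ordinal) * (x % ω) + (cidx g hfib (g i) i : Ordinal))
  else γ + ((off n g hfib (g i) (cidx g hfib (g i) i) : ℕ) + (x - γ))

variable {hfib : ∀ j, (g ⁻¹' {j}).Finite} {i i' j : I} {x x' : Ordinal}

lemma emap_lt_gamma (hγ : γ = 0 ∨ Order.IsSuccLimit γ) (hx : x < γ) : emap γ n g hfib i x < γ := by
  rw [emap, if_pos hx]
  obtain ⟨r, hr⟩ := Ordinal.lt_omega0.1 (Ordinal.mod_lt x Ordinal.omega0_ne_zero)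
  rw [hr, ← Ordinal.natCast_mul, ← Nat.cast_add]
  exact limit_add_nat_lt (isLimit_of_lt hγ hx) (lt_of_le_of_lt (Ordinal.mul_div_le x ω) hx) _

lemma emap_top (hx : γ ≤ x) {t : ℕ} (hxt : x = γ + t) :
    emap γ n g hfib i x = γ + ((off n g hfib (g i) (cidx g hfib (g i) i) + t : ℕ) : Ordinal) := by
  rw [emap, if_neg (not_lt.2 hx), hxt, Ordinal.add_sub_cancel, Nat.cast_add]

lemma emap_mem (hγ : γ = 0 ∨ Order.IsSuccLimit γ) (hsum : ∑ᶠ i' ∈ g ⁻¹' {g i}, n i' = n (g i))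
    (hx : x < γ + (n i : Ordinal)) : emap γ n g hfib i x < γ + (n (g i) : Ordinal) := by
  by_cases h : x < γ
  · exact lt_of_lt_of_le (emap_lt_gamma hγ h) (le_self_add)
  · push_neg at h
    obtain ⟨t, ht, hxt⟩ := top_decomp h hx
    rw [emap_top h hxt, add_lt_add_iff_left, Nat.cast_lt]
    have hmem : i ∈ Ffin g hfib (g i) := (mem_Ffin g).2 rfl
    have := off_add_le hmem hsum
    omega

lemma emap_strictmono (hγ : γ = 0 ∨ Order.IsSuccLimit γ)
    (hx : x < γ + (n i : Ordinal)) (hx' : x' < γ + (n i : Ordinal)) (hlt : x < x') :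
    emap γ n g hfib i x < emap γ n g hfib i x' := by
  have hmem : i ∈ Ffin g hfib (g i) := (mem_Ffin g).2 rfl
  have hk : 0 < kk g hfib (g i) := Finset.card_pos.2 ⟨i, hmem⟩
  by_cases h1 : x < γ
  · by_cases h2 : x' < γ
    · rw [emap, if_pos h1, emap, if_pos h2]
      obtain ⟨r, hr⟩ := Ordinal.lt_omega0.1 (Ordinal.mod_lt x Ordinal.omega0_ne_zero)
      obtain ⟨r', hr'⟩ := Ordinal.lt_omega0.1 (Ordinal.mod_lt x' Ordinal.omega0_ne_zero)
      have hdx : x = ω * (x / ω) + (r : Ordinal) := by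
        rw [← hr]; exact (Ordinal.div_add_mod x ω).symm
      have hdx' : x' = ω * (x' / ω) + (r' : Ordinal) := by
        rw [← hr']; exact (Ordinal.div_add_mod x' ω).symm
      rw [hdx, hdx'] at hlt
      rcases decomp_lt_cases (Ordinal.nat_lt_omega0 r) (Ordinal.nat_lt_omega0 r') hlt with
        hq | ⟨hq, hrr⟩
      · rw [hr, hr', ← Ordinal.natCast_mul, ← Nat.cast_add, ← Ordinal.natCast_mul,
          ← Nat.cast_add]
        exact decomp_lt (Ordinal.nat_lt_omega0 _) hq
      · rw [hq, hr, hr', ← Ordinal.natCast_mul, ← Nat.cast_add, ← Ordinal.natCast_mul,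
          ← Nat.cast_add]
        rw [add_lt_add_iff_left, Nat.cast_lt]
        have : r < r' := by exact_mod_cast hrr
        have h9 : kk g hfib (g i) * r < kk g hfib (g i) * r' :=
          Nat.mul_lt_mul_of_le_of_lt (le_refl _) this hk
        omega
    · push_neg at h2
      obtain ⟨t, ht, hxt⟩ := top_decomp h2 hx'
      calc emap γ n g hfib i x < γ := emap_lt_gamma hγ h1
        _ ≤ emap γ n g hfib i x' := by rw [emap_top h2 hxt]; exact le_self_add
  · push_neg at h1
    have h2 : γ ≤ x' := le_trans h1 (le_of_lt hlt)
    obtain ⟨t, ht, hxt⟩ := top_decomp h1 hx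
    obtain ⟨t', ht', hxt'⟩ := top_decomp h2 hx'
    rw [emap_top h1 hxt, emap_top h2 hxt']
    have htt : t < t' := by
      rw [hxt, hxt'] at hlt
      have := (add_lt_add_iff_left γ).1 hlt
      exact_mod_cast this
    rw [add_lt_add_iff_left, Nat.cast_lt]
    omega

end Eval
section Eval2

variable {I : Type*} {γ : Ordinal} {n : I → ℕ} {g : I → I}
variable {hfib : ∀ j, (g ⁻¹' {j}).Finite} {i i' j : I} {x x' : Ordinal}

lemma emap_inj (hγ : γ = 0 ∨ Order.IsSuccLimit γ) (hg : g i = g i')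
    (hx : x < γ + (n i : Ordinal)) (hx' : x' < γ + (n i' : Ordinal))
    (heq : emap γ n g hfib i x = emap γ n g hfib i' x') : i = i' ∧ x = x' := by
  have hmem : i ∈ Ffin g hfib (g i) := (mem_Ffin g).2 rfl
  have hmem' : i' ∈ Ffin g hfib (g i) := (mem_Ffin g).2 hg.symm
  have hk : 0 < kk g hfib (g i) := Finset.card_pos.2 ⟨i, hmem⟩
  by_cases h1 : x < γ
  · by_cases h2 : x' < γ
    · rw [emap, if_pos h1, emap, if_pos h2, ← hg] at heq
      obtain ⟨r, hr⟩ := Ordinal.lt_omega0.1 (Ordinal.mod_lt x Ordinal.omega0_ne_zero)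
      obtain ⟨r', hr'⟩ := Ordinal.lt_omega0.1 (Ordinal.mod_lt x' Ordinal.omega0_ne_zero)
      rw [hr, hr', ← Ordinal.natCast_mul, ← Nat.cast_add, ← Ordinal.natCast_mul,
        ← Nat.cast_add] at heq
      obtain ⟨hq, htail⟩ := decomp_unique (Ordinal.nat_lt_omega0 _) (Ordinal.nat_lt_omega0 _) heq
      have htail' : kk g hfib (g i) * r + cidx g hfib (g i) i
          = kk g hfib (g i) * r' + cidx g hfib (g i) i' := by exact_mod_cast htail
      have hc : cidx g hfib (g i) i < kk g hfib (g i) := cidx_lt hmem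
      have hc' : cidx g hfib (g i) i' < kk g hfib (g i) := cidx_lt hmem'
      have e1 : (kk g hfib (g i) * r + cidx g hfib (g i) i) % kk g hfib (g i)
          = cidx g hfib (g i) i := by rw [Nat.mul_add_mod]; exact Nat.mod_eq_of_lt hc
      have e2 : (kk g hfib (g i) * r' + cidx g hfib (g i) i') % kk g hfib (g i)
          = cidx g hfib (g i) i' := by rw [Nat.mul_add_mod]; exact Nat.mod_eq_of_lt hc'
      have hcc : cidx g hfib (g i) i = cidx g hfib (g i) i' := by
        rw [← e1, ← e2, htail']
      have hii : i = i' := cidx_inj hmem hmem' hcc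
      have hrr : r = r' := by
        have : kk g hfib (g i) * r = kk g hfib (g i) * r' := by omega
        exact Nat.eq_of_mul_eq_mul_left hk this
      refine ⟨hii, ?_⟩
      have dx := Ordinal.div_add_mod x ω
      have dx' := Ordinal.div_add_mod x' ω
      rw [← dx, ← dx', hr, hr', hq, hrr]
    · push_neg at h2
      obtain ⟨t, ht, hxt⟩ := top_decomp h2 hx'
      have hlt := emap_lt_gamma (n := n) (hfib := hfib) (i := i) hγ h1
      rw [heq, emap_top h2 hxt] at hlt
      exact absurd hlt (not_lt.2 (le_self_add))
  · push_neg at h1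
    by_cases h2 : x' < γ
    · obtain ⟨t, ht, hxt⟩ := top_decomp h1 hx
      have hlt := emap_lt_gamma (n := n) (hfib := hfib) (i := i') hγ h2
      rw [← heq, emap_top h1 hxt] at hlt
      exact absurd hlt (not_lt.2 (le_self_add))
    · push_neg at h2
      obtain ⟨t, ht, hxt⟩ := top_decomp h1 hx
      obtain ⟨t', ht', hxt'⟩ := top_decomp h2 hx'
      rw [emap_top h1 hxt, emap_top h2 hxt', ← hg] at heq
      have hnat : off n g hfib (g i) (cidx g hfib (g i) i) + t
          = off n g hfib (g i) (cidx g hfib (g i) i') + t' := by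
        have := (add_right_inj γ).1 heq
        exact_mod_cast this
      have hN : NN n g hfib (g i) (cidx g hfib (g i) i) = n i := NN_cidx hmem
      have hN' : NN n g hfib (g i) (cidx g hfib (g i) i') = n i' := NN_cidx hmem'
      have hcc : cidx g hfib (g i) i = cidx g hfib (g i) i' := by
        by_contra hne
        have hb1 : off n g hfib (g i) (cidx g hfib (g i) i)
            ≤ off n g hfib (g i) (cidx g hfib (g i) i) + t := Nat.le_add_right _ _
        have hb2 : off n g hfib (g i) (cidx g hfib (g i) i) + t
            < off n g hfib (g i) (cidx g hfib (g i) i)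
              + NN n g hfib (g i) (cidx g hfib (g i) i) := by rw [hN]; omega
        have hb3 : off n g hfib (g i) (cidx g hfib (g i) i')
            ≤ off n g hfib (g i) (cidx g hfib (g i) i) + t := by omega
        have hb4 : off n g hfib (g i) (cidx g hfib (g i) i) + t
            < off n g hfib (g i) (cidx g hfib (g i) i')
              + NN n g hfib (g i) (cidx g hfib (g i) i') := by rw [hN']; omega
        exact interval_disj hne hb1 hb2 hb3 hb4
      have hii : i = i' := cidx_inj hmem hmem' hcc
      have htt : t = t' := by rw [hcc] at hnat; omega
      exact ⟨hii, by rw [hxt, hxt', htt]⟩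

lemma emap_surj (hγ : γ = 0 ∨ Order.IsSuccLimit γ) (hsum : ∑ᶠ i ∈ g ⁻¹' {j}, n i = n j)
    (hne : ∃ i, g i = j) {y : Ordinal} (hy : y < γ + (n j : Ordinal)) :
    ∃ i x, g i = j ∧ x < γ + (n i : Ordinal) ∧ emap γ n g hfib i x = y := by
  have hFne : (Ffin g hfib j).Nonempty := by
    obtain ⟨i, hi⟩ := hne
    exact ⟨i, (mem_Ffin g).2 hi⟩
  have hk : 0 < kk g hfib j := Finset.card_pos.2 hFne
  by_cases h1 : y < γ
  · have hlim := isLimit_of_lt hγ h1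
    obtain ⟨r, hr⟩ := Ordinal.lt_omega0.1 (Ordinal.mod_lt y Ordinal.omega0_ne_zero)
    have hdy : y = ω * (y / ω) + (r : Ordinal) := by
      rw [← hr]; exact (Ordinal.div_add_mod y ω).symm
    obtain ⟨i, hmem, hcidx⟩ := cidx_surj (j := j) (Nat.mod_lt r hk)
    have hgi : g i = j := (mem_Ffin g).1 hmem
    subst hgi
    refine ⟨i, ω * (y / ω) + ((r / kk g hfib (g i) : ℕ) : Ordinal), rfl, ?_, ?_⟩
    · have : ω * (y / ω) + ((r / kk g hfib (g i) : ℕ) : Ordinal) < γ :=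
        limit_add_nat_lt hlim (lt_of_le_of_lt (Ordinal.mul_div_le y ω) h1) _
      exact lt_of_lt_of_le this (le_self_add)
    · have hxlt : ω * (y / ω) + ((r / kk g hfib (g i) : ℕ) : Ordinal) < γ :=
        limit_add_nat_lt hlim (lt_of_le_of_lt (Ordinal.mul_div_le y ω) h1) _
      rw [emap, if_pos hxlt]
      obtain ⟨hdiv, hmod⟩ := div_mod_spec (Ordinal.nat_lt_omega0 (r / kk g hfib (g i))) rfl
      rw [hdiv, hmod, hcidx, ← Ordinal.natCast_mul, ← Nat.cast_add, Nat.div_add_mod, ← hr]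
      exact Ordinal.div_add_mod y ω
  · push_neg at h1
    obtain ⟨b, hb, hyb⟩ := top_decomp h1 hy
    have hboff : b < off n g hfib j (kk g hfib j) := by rw [off_total hsum]; exact hb
    obtain ⟨c, hck, hc1, hc2⟩ := exists_off _ hboff
    obtain ⟨i, hmem, hcidx⟩ := cidx_surj (j := j) hck
    have hgi : g i = j := (mem_Ffin g).1 hmem
    subst hgi
    have hN : NN n g hfib (g i) c = n i := by rw [← hcidx]; exact NN_cidx hmem
    refine ⟨i, γ + ((b - off n g hfib (g i) c : ℕ) : Ordinal), rfl, ?_, ?_⟩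
    · rw [add_lt_add_iff_left, Nat.cast_lt]; omega
    · rw [emap_top (le_self_add) rfl, hcidx]
      rw [hyb]
      congr 1
      rw [Nat.cast_inj]
      omega

end Eval2
section NotRev

open Function

lemma not_reversible_of_seq_witness {I : Type*} {γ : Ordinal} (hγ : γ = 0 ∨ Order.IsSuccLimit γ)
    {n : I → ℕ} (hpos : ∀ i, 0 < γ + (n i : Ordinal)) {g : I → I}
    (hsurj : Function.Surjective g) (hninj : ¬ Function.Injective g)
    (hfib : ∀ j, (g ⁻¹' {j}).Finite)
    (hsum : ∀ j, ∑ᶠ i ∈ g ⁻¹' {j}, n i = n j) :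
    ¬ Reversible (Σ i, ↥(Iio (γ + (n i : Ordinal)))) := by
  intro hrev
  set F : (Σ i, ↥(Iio (γ + (n i : Ordinal)))) → (Σ i, ↥(Iio (γ + (n i : Ordinal)))) :=
    fun a => ⟨g a.1, ⟨emap γ n g hfib a.1 a.2.1,
      emap_mem hγ (hsum (g a.1)) a.2.2⟩⟩ with hF
  have hFfst : ∀ a, (F a).1 = g a.1 := fun a => rfl
  have hFval : ∀ a, sval (F a) = emap γ n g hfib a.1 a.2.1 := fun a => rfl
  have hinj : Function.Injective F := by
    intro a b hab
    have h1 : g a.1 = g b.1 := by rw [← hFfst a, ← hFfst b, hab]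
    have h2 : emap γ n g hfib a.1 a.2.1 = emap γ n g hfib b.1 b.2.1 := by
      rw [← hFval a, ← hFval b, hab]
    obtain ⟨hi, hx⟩ := emap_inj hγ h1 a.2.2 b.2.2 h2
    exact sigma_ext_val hi (by rwa [sval, sval])
  have hsurjF : Function.Surjective F := by
    rintro ⟨j, y⟩
    obtain ⟨i, x, hgi, hx, hex⟩ := emap_surj (hfib := hfib) hγ (hsum j) (hsurj j) y.2
    refine ⟨⟨i, ⟨x, hx⟩⟩, ?_⟩
    exact sigma_ext_val hgi (by rw [hFval]; exact hex)
  have hmono : Monotone F := by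
    intro a b hab
    obtain ⟨i, x⟩ := a
    obtain ⟨i', y⟩ := b
    obtain ⟨h1, h2⟩ := Sigma.le_def.1 hab
    dsimp at h1; subst h1
    have hxy : x ≤ y := h2
    apply sigma_le_of_val (by rfl)
    rw [hFval, hFval]
    rcases eq_or_lt_of_le hxy with he | hlt
    · rw [he]
    · exact le_of_lt (emap_strictmono hγ x.2 y.2 hlt)
  obtain ⟨a, b, hab, hne⟩ := Function.not_injective_iff.1 hninj
  set pa : (Σ i, ↥(Iio (γ + (n i : Ordinal)))) := ⟨a, ⟨0, hpos a⟩⟩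
  set pb : (Σ i, ↥(Iio (γ + (n i : Ordinal)))) := ⟨b, ⟨0, hpos b⟩⟩
  have hfst : (F pa).1 = (F pb).1 := by rw [hFfst, hFfst]; exact hab
  rcases le_total (sval (F pa)) (sval (F pb)) with h | h
  · have := hrev F ⟨hinj, hsurjF⟩ hmono pa pb (sigma_le_of_val hfst h)
    exact hne (sigma_le_fst this)
  · have := hrev F ⟨hinj, hsurjF⟩ hmono pb pa (sigma_le_of_val hfst.symm h)
    exact hne (sigma_le_fst this).symm

end NotRev
section RevDir

open Function

lemma cast_lt_top {γ : Ordinal} {m t : ℕ} (h : t < m) : γ + (t : Ordinal) < γ + (m : Ordinal) := by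
  rw [add_lt_add_iff_left, Nat.cast_lt]; exact h

lemma reversible_of_conditions {I : Type*} {γ : Ordinal} (hγ : γ = 0 ∨ Order.IsSuccLimit γ)
    {n : I → ℕ} (hpos : ∀ i, 0 < γ + (n i : Ordinal))
    (hZ : {i | n i = 0}.Finite)
    (hrs : RevSeqNat (fun i : {i // n i ≠ 0} => n i)) :
    Reversible (Σ i, ↥(Iio (γ + (n i : Ordinal)))) := by
  classical
  intro f hbij hmono x y hle
  set pt : ∀ i, ↥(Iio (γ + (n i : Ordinal))) := fun i => ⟨0, hpos i⟩ with hpt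
  set g : I → I := fun i => (f ⟨i, pt i⟩).1 with hg
  have hfst : ∀ i (a : ↥(Iio (γ + (n i : Ordinal)))), (f ⟨i, a⟩).1 = g i := by
    intro i a
    rcases le_total a (pt i) with h | h
    · exact sigma_le_fst (hmono (Sigma.mk_le_mk_iff.2 h))
    · exact (sigma_le_fst (hmono (Sigma.mk_le_mk_iff.2 h))).symm
  have hstrict : ∀ i (a b : ↥(Iio (γ + (n i : Ordinal)))), a < b →
      sval (f ⟨i, a⟩) < sval (f ⟨i, b⟩) := by
    intro i a b hab
    have h1 : sval (f ⟨i, a⟩) ≤ sval (f ⟨i, b⟩) :=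
      sval_le (hmono (Sigma.mk_le_mk_iff.2 hab.le))
    rcases eq_or_lt_of_le h1 with he | hlt
    · exfalso
      have : f ⟨i, a⟩ = f ⟨i, b⟩ :=
        sigma_ext_val ((hfst i a).trans (hfst i b).symm) he
      have h2 := hbij.1 this
      have h3 : a = b := by
        have := congrArg (fun z : (Σ i, ↥(Iio (γ + (n i : Ordinal)))) => sval z) h2
        exact Subtype.ext this
      exact absurd h3 (ne_of_lt hab)
    · exact hlt
  have hge : ∀ i (v : Ordinal) (hv : v ∈ Iio (γ + (n i : Ordinal))),
      v ≤ sval (f ⟨i, ⟨v, hv⟩⟩) := by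
    intro i v
    induction v using Ordinal.induction with
    | h v IH =>
      intro hv
      apply le_of_forall_lt
      intro c hc
      have hcv : c ∈ Iio (γ + (n i : Ordinal)) := lt_trans hc hv
      calc c ≤ sval (f ⟨i, ⟨c, hcv⟩⟩) := IH c hc hcv
        _ < sval (f ⟨i, ⟨v, hv⟩⟩) := hstrict i _ _ (by exact hc)
  set T : I → Set (Σ i, ↥(Iio (γ + (n i : Ordinal)))) :=
    fun j => {y | y.1 = j ∧ γ ≤ sval y} with hT
  set tp : ∀ j, Fin (n j) → (Σ i, ↥(Iio (γ + (n i : Ordinal)))) :=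
    fun j t => ⟨j, ⟨γ + t, cast_lt_top t.2⟩⟩ with htp
  have hTeq : ∀ j, T j = Set.range (tp j) := by
    intro j
    ext y
    constructor
    · rintro ⟨h1, h2⟩
      obtain ⟨t, ht, hyt⟩ := top_decomp h2
        (show sval y < γ + ((n j : ℕ) : Ordinal) by rw [← h1]; exact y.2.2)
      refine ⟨⟨t, ht⟩, ?_⟩
      exact sigma_ext_val h1.symm (show (γ + (t:Ordinal)) = sval y from hyt.symm)
    · rintro ⟨t, rfl⟩
      exact ⟨rfl, le_self_add⟩
  have hTfin : ∀ j, (T j).Finite := by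
    intro j; rw [hTeq j]; exact Set.finite_range (tp j)
  have htpinj : ∀ j, Function.Injective (tp j) := by
    intro j t t' htt
    have := congrArg (fun z : (Σ i, ↥(Iio (γ + (n i : Ordinal)))) => sval z) htt
    simp only [htp, sval] at this
    have := (add_right_inj γ).1 this
    exact Fin.val_injective (by exact_mod_cast this)
  have hTcard : ∀ j, ((hTfin j).toFinset).card = n j := by
    intro j
    have h1 : (hTfin j).toFinset = Finset.image (tp j) Finset.univ := by
      ext y
      simp only [Set.Finite.mem_toFinset, Finset.mem_image, Finset.mem_univ, true_and]
      rw [hTeq j]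
      exact Iff.rfl
    rw [h1, Finset.card_image_of_injective _ (htpinj j), Finset.card_univ, Fintype.card_fin]
  have hA : ∀ i (a : ↥(Iio (γ + (n i : Ordinal)))), γ ≤ a.1 → f ⟨i, a⟩ ∈ T (g i) :=
    fun i a h => ⟨hfst i a, le_trans h (hge i a.1 a.2)⟩
  have hB : ∀ i (a : ↥(Iio (γ + (n i : Ordinal)))), f ⟨i, a⟩ ∈ T (g i) → γ ≤ a.1 := by
    intro i a hmem
    by_contra hlt
    push_neg at hlt
    have hlim := isLimit_of_lt hγ hlt
    have hmm : ∀ m : ℕ, a.1 + (m : Ordinal) ∈ Iio (γ + (n i : Ordinal)) := fun m =>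
      lt_of_lt_of_le (limit_add_nat_lt hlim hlt m) (le_self_add)
    set u : ℕ → (Σ i, ↥(Iio (γ + (n i : Ordinal)))) :=
      fun m => f ⟨i, ⟨a.1 + m, hmm m⟩⟩ with hu
    have humem : ∀ m, u m ∈ T (g i) := by
      intro m
      refine ⟨hfst i _, le_trans hmem.2 ?_⟩
      apply sval_le
      apply hmono
      apply Sigma.mk_le_mk_iff.2
      show a ≤ (⟨a.1 + m, hmm m⟩ : ↥(Iio (γ + (n i : Ordinal))))
      exact Subtype.mk_le_mk.2 (by simpa using (le_self_add : a.1 ≤ a.1 + m))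
    have huinj : Function.Injective u := by
      intro m m' hmm'
      have h2 := hbij.1 hmm'
      have h3 := congrArg (fun z : (Σ i, ↥(Iio (γ + (n i : Ordinal)))) => sval z) h2
      simp only [sval] at h3
      have := (add_right_inj a.1).1 h3
      exact_mod_cast this
    exact (Set.infinite_of_injective_forall_mem huinj humem) (hTfin (g i))
  have hgsurj : Function.Surjective g := by
    intro j
    obtain ⟨a, ha⟩ := hbij.2 ⟨j, pt j⟩
    refine ⟨a.1, ?_⟩
    have : (f a).1 = j := by rw [ha]
    rw [← this]
    exact (hfst a.1 a.2).symm
  set B : I → Set I := fun j => {i | g i = j ∧ n i ≠ 0} with hBdef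
  have hbound : ∀ i, n i ≠ 0 → γ < γ + (n i : Ordinal) := by
    intro i h
    have : (0 : Ordinal) < (n i : Ordinal) := by
      have : 0 < n i := Nat.pos_of_ne_zero h
      exact_mod_cast this
    calc γ = γ + 0 := (add_zero γ).symm
      _ < γ + (n i : Ordinal) := by rwa [add_lt_add_iff_left]
  set gm : I → (Σ i, ↥(Iio (γ + (n i : Ordinal)))) := fun i =>
    if h : (γ : Ordinal) < γ + (n i : Ordinal) then f ⟨i, ⟨γ, h⟩⟩ else f ⟨i, pt i⟩ with hgm
  have hBfin : ∀ j, (B j).Finite := by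
    intro j
    apply Set.Finite.of_finite_image (f := gm)
    · apply Set.Finite.subset (hTfin j)
      rintro y ⟨i, ⟨hgi, hni⟩, rfl⟩
      rw [hgm]
      simp only
      rw [dif_pos (hbound i hni)]
      have := hA i ⟨γ, hbound i hni⟩ (le_refl γ)
      rwa [hgi] at this
    · intro i hi i' hi' he
      rw [hgm] at he
      simp only at he
      rw [dif_pos (hbound i hi.2), dif_pos (hbound i' hi'.2)] at he
      exact congrArg Sigma.fst (hbij.1 he)
  -- the key counting identity
  have hBsum : ∀ j, ∑ i ∈ (hBfin j).toFinset, n i = n j := by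
    intro j
    set e := Equiv.ofBijective f hbij with he
    set cl : (Σ i, ↥(Iio (γ + (n i : Ordinal)))) → I := fun z => (e.symm z).1 with hcl
    have hclmem : ∀ z ∈ (hTfin j).toFinset, cl z ∈ (hBfin j).toFinset := by
      intro z hz
      rw [Set.Finite.mem_toFinset] at hz ⊢
      set a := e.symm z with ha
      have hfa : f a = z := e.apply_symm_apply z
      have hfz : (f a).1 = j := by rw [hfa]; exact hz.1
      have hgj : g a.1 = j := by rw [← hfst a.1 a.2]; exact hfz
      have hmem : f ⟨a.1, a.2⟩ ∈ T (g a.1) := by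
        rw [hgj]
        show f a ∈ T j
        rw [hfa]; exact hz
      have hga := hB a.1 a.2 hmem
      have hni : n a.1 ≠ 0 := by
        intro h0
        have h3 : γ + ((n a.fst : ℕ) : Ordinal) = γ := by rw [h0]; simp
        exact absurd hga (not_le.2 (lt_of_lt_of_eq a.2.2 h3))
      exact ⟨hgj, hni⟩
    have hcards := Finset.card_eq_sum_card_fiberwise hclmem
    rw [hTcard j] at hcards
    rw [hcards]
    apply Finset.sum_congr rfl
    intro i hi
    rw [Set.Finite.mem_toFinset] at hi
    obtain ⟨hgi, hni⟩ := hi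
    set m : Fin (n i) → (Σ i, ↥(Iio (γ + (n i : Ordinal)))) :=
      fun t => f ⟨i, ⟨γ + t, cast_lt_top t.2⟩⟩ with hm
    have hminj : Function.Injective m := by
      intro t t' htt
      have h2 := hbij.1 htt
      have h3 := congrArg (fun z : (Σ i, ↥(Iio (γ + (n i : Ordinal)))) => sval z) h2
      simp only [sval] at h3
      have := (add_right_inj γ).1 h3
      exact Fin.val_injective (by exact_mod_cast this)
    have himg : ((hTfin j).toFinset).filter (fun z => cl z = i)
        = Finset.image m Finset.univ := by
      ext z
      simp only [Finset.mem_filter, Set.Finite.mem_toFinset, Finset.mem_image,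
        Finset.mem_univ, true_and]
      constructor
      · rintro ⟨hzT, hclz⟩
        set a := e.symm z with ha
        have hfa : f a = z := e.apply_symm_apply z
        have hgj : g a.1 = j := by
          rw [← hfst a.1 a.2]
          show (f a).1 = j
          rw [hfa]; exact hzT.1
        have hmem : f ⟨a.1, a.2⟩ ∈ T (g a.1) := by
          rw [hgj]; show f a ∈ T j; rw [hfa]; exact hzT
        have hga := hB a.1 a.2 hmem
        obtain ⟨t, ht, hat⟩ := top_decomp hga a.2.2
        have hai : a.1 = i := hclz
        refine ⟨⟨t, hai ▸ ht⟩, ?_⟩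
        rw [hm]
        simp only
        rw [← hfa]
        congr 1
        refine sigma_ext_val hai.symm ?_
        show (γ + (t : Ordinal)) = a.2.1
        exact hat.symm
      · rintro ⟨t, rfl⟩
        constructor
        · have := hA i ⟨γ + t, cast_lt_top t.2⟩ (le_self_add)
          rw [hgi] at this
          exact this
        · show (e.symm (m t)).1 = i
          rw [hm]
          simp only
          show (e.symm (e ⟨i, _⟩)).1 = i
          rw [Equiv.symm_apply_apply]
    rw [himg, Finset.card_image_of_injective _ hminj, Finset.card_univ, Fintype.card_fin]
  -- injectivity of g
  have hginj : Function.Injective g := by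
    by_contra hninj
    have hle1 : ∀ i, n i ≤ n (g i) := by
      intro i
      by_cases h : n i = 0
      · rw [h]; exact Nat.zero_le _
      · have hmem : i ∈ (hBfin (g i)).toFinset := by
          rw [Set.Finite.mem_toFinset]; exact ⟨rfl, h⟩
        have := Finset.single_le_sum (f := n) (fun _ _ => Nat.zero_le _) hmem
        rwa [hBsum (g i)] at this
    have hZmap : ∀ i, n (g i) = 0 → n i = 0 := fun i h => by have := hle1 i; omega
    set Zf : Finset I := hZ.toFinset with hZf
    have hZsub : Zf ⊆ Zf.image g := by
      intro j hj
      rw [Set.Finite.mem_toFinset] at hj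
      obtain ⟨i, hi⟩ := hgsurj j
      have hni : n i = 0 := hZmap i (by rwa [hi])
      rw [Finset.mem_image]
      exact ⟨i, by rw [Set.Finite.mem_toFinset]; exact hni, hi⟩
    have hZeq : Zf = Zf.image g :=
      Finset.eq_of_subset_of_card_le hZsub (Finset.card_image_le)
    have hZinj : Set.InjOn g ↑Zf :=
      Finset.injOn_of_card_image_eq (by rw [← hZeq])
    have hZclosed : ∀ i, n i = 0 → n (g i) = 0 := by
      intro i hi
      have : g i ∈ Zf.image g := Finset.mem_image_of_mem g (by rw [Set.Finite.mem_toFinset]; exact hi)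
      rw [← hZeq, Set.Finite.mem_toFinset] at this
      exact this
    obtain ⟨u, v, huv, hne⟩ := Function.not_injective_iff.1 hninj
    have hJu : n u ≠ 0 := by
      intro h0
      have h1 : n (g u) = 0 := hZclosed u h0
      have h2 : n v = 0 := hZmap v (by rw [← huv]; exact h1)
      exact hne (hZinj (by simp only [hZf, Finset.coe_sort_coe, Set.Finite.mem_toFinset,
          Finset.mem_coe]; exact h0)
        (by simp only [hZf, Finset.coe_sort_coe, Set.Finite.mem_toFinset,
          Finset.mem_coe]; exact h2) huv)
    have hJv : n v ≠ 0 := by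
      intro h0
      have h1 : n (g v) = 0 := hZclosed v h0
      have h2 : n u = 0 := hZmap u (by rw [huv]; exact h1)
      exact hJu h2
    have hgJ : ∀ i : {i // n i ≠ 0}, n (g i.1) ≠ 0 := by
      intro i h0
      exact i.2 (hZmap _ h0)
    set h : {i // n i ≠ 0} → {i // n i ≠ 0} := fun i => ⟨g i.1, hgJ i⟩ with hh
    apply hrs
    refine ⟨h, ?_, ?_, ?_⟩
    · intro j
      have hBne : ((hBfin j.1).toFinset).Nonempty := by
        by_contra hemp
        rw [Finset.not_nonempty_iff_eq_empty] at hemp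
        have := hBsum j.1
        rw [hemp, Finset.sum_empty] at this
        exact j.2 this.symm
      obtain ⟨i, hi⟩ := hBne
      rw [Set.Finite.mem_toFinset] at hi
      exact ⟨⟨i, hi.2⟩, Subtype.ext hi.1⟩
    · intro hinjh
      exact hne (congrArg Subtype.val
        (hinjh (show h ⟨u, hJu⟩ = h ⟨v, hJv⟩ from Subtype.ext huv)))
    · intro j
      have himg : Subtype.val '' (h ⁻¹' {j}) = B j.1 := by
        ext i
        constructor
        · rintro ⟨⟨i', hi'⟩, hmem, rfl⟩
          simp only [Set.mem_preimage, Set.mem_singleton_iff, hh] at hmem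
          exact ⟨congrArg Subtype.val hmem, hi'⟩
        · rintro ⟨hgi, hni⟩
          exact ⟨⟨i, hni⟩, Subtype.ext hgi, rfl⟩
      calc ∑ᶠ i ∈ h ⁻¹' {j}, n i.1
          = ∑ᶠ i ∈ Subtype.val '' (h ⁻¹' {j}), n i :=
            (finsum_mem_image (Subtype.val_injective.injOn)).symm
        _ = ∑ᶠ i ∈ B j.1, n i := by rw [himg]
        _ = ∑ i ∈ (hBfin j.1).toFinset, n i := finsum_mem_eq_finite_toFinset_sum _ _
        _ = n j.1 := hBsum j.1
  -- conclusion
  have hfx : (f x).1 = g x.1 := hfst x.1 x.2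
  have hfy : (f y).1 = g y.1 := hfst y.1 y.2
  have hgxy : g x.1 = g y.1 := by rw [← hfx, ← hfy]; exact sigma_le_fst hle
  have hxy1 : x.1 = y.1 := hginj hgxy
  obtain ⟨i, a⟩ := x
  obtain ⟨i', b⟩ := y
  dsimp at hxy1
  subst hxy1
  apply Sigma.mk_le_mk_iff.2
  by_contra hab
  push_neg at hab
  have h1 := hstrict i b a hab
  have h2 := sval_le hle
  exact absurd h1 (not_lt.2 h2)

end RevDir
section Witnesses

open Function

lemma witness_of_infinite {I : Type*} {n : I → ℕ} (hinf : {i | n i = 0}.Infinite) :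
    ∃ g : I → I, Surjective g ∧ ¬Injective g ∧ (∀ j, (g ⁻¹' {j}).Finite)
      ∧ ∀ j, ∑ᶠ i ∈ g ⁻¹' {j}, n i = n j := by
  classical
  set emb := Set.Infinite.natEmbedding _ hinf with hemb
  set a : ℕ → I := fun m => (emb m).1 with ha
  have hainj : Injective a := fun m m' h => emb.injective (Subtype.ext h)
  have ha0 : ∀ m, n (a m) = 0 := fun m => (emb m).2
  set g : I → I := fun i => if h : ∃ m, a m = i then a (h.choose - 1) else i with hg
  have hkey : ∀ m, g (a m) = a (m - 1) := by
    intro m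
    have hex : ∃ m', a m' = a m := ⟨m, rfl⟩
    have : g (a m) = a (hex.choose - 1) := by rw [hg]; exact dif_pos hex
    rw [this, hainj hex.choose_spec]
  have hgid : ∀ i, (¬ ∃ m, a m = i) → g i = i := by
    intro i h
    rw [hg]; exact dif_neg h
  have hfib : ∀ j, (g ⁻¹' {j}).Finite := by
    intro j
    by_cases h : ∃ m, a m = j
    · apply Set.Finite.subset ((Set.finite_singleton (a (h.choose + 1))).insert j)
      intro i hi
      simp only [Set.mem_preimage, Set.mem_singleton_iff] at hi
      rw [Set.mem_insert_iff, Set.mem_singleton_iff]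
      by_cases hr : ∃ m, a m = i
      · obtain ⟨m, rfl⟩ := hr
        rw [hkey m] at hi
        have hmc : m - 1 = h.choose := hainj (hi.trans h.choose_spec.symm)
        rcases Nat.eq_zero_or_pos m with hm0 | hmpos
        · subst hm0
          have hc0 : h.choose = 0 := by omega
          left
          rw [← h.choose_spec, hc0]
        · right
          congr 1
          omega
      · rw [hgid i hr] at hi
        exact Or.inl hi
    · apply Set.Finite.subset (Set.finite_singleton j)
      intro i hi
      simp only [Set.mem_preimage, Set.mem_singleton_iff] at hi ⊢
      by_cases hr : ∃ m, a m = i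
      · obtain ⟨m, rfl⟩ := hr
        rw [hkey m] at hi
        exact absurd ⟨m - 1, hi⟩ h
      · rwa [hgid i hr] at hi
  refine ⟨g, ?_, ?_, hfib, ?_⟩
  · intro j
    by_cases h : ∃ m, a m = j
    · obtain ⟨m, rfl⟩ := h
      exact ⟨a (m + 1), by rw [hkey]; congr 1⟩
    · exact ⟨j, hgid j h⟩
  · intro hinj
    have h01 : g (a 0) = g (a 1) := by rw [hkey 0, hkey 1]
    exact absurd (hainj (hinj h01)) (by norm_num)
  · intro j
    by_cases hj : n j = 0
    · rw [hj]
      apply finsum_mem_of_eqOn_zero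
      intro i hi
      simp only [Set.mem_preimage, Set.mem_singleton_iff] at hi
      by_cases hr : ∃ m, a m = i
      · obtain ⟨m, rfl⟩ := hr; exact ha0 m
      · rw [hgid i hr] at hi; subst hi; exact hj
    · have hjr : ¬ ∃ m, a m = j := by
        rintro ⟨m, rfl⟩; exact hj (ha0 m)
      have : g ⁻¹' {j} = {j} := by
        ext i
        simp only [Set.mem_preimage, Set.mem_singleton_iff]
        constructor
        · intro hi
          by_cases hr : ∃ m, a m = i
          · obtain ⟨m, rfl⟩ := hr
            rw [hkey m] at hi
            exact absurd ⟨m - 1, hi⟩ hjr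
          · rwa [hgid i hr] at hi
        · intro hij; rw [hij]; exact hgid j hjr
      rw [this, finsum_mem_singleton]

lemma witness_of_nonrev {I : Type*} {n : I → ℕ}
    (hns : ¬ RevSeqNat (fun i : {i // n i ≠ 0} => n i)) :
    ∃ g : I → I, Surjective g ∧ ¬Injective g ∧ (∀ j, (g ⁻¹' {j}).Finite)
      ∧ ∀ j, ∑ᶠ i ∈ g ⁻¹' {j}, n i = n j := by
  classical
  rw [RevSeqNat, not_not] at hns
  obtain ⟨h, hsurj, hninj, hsums⟩ := hns
  set g : I → I := fun i => if hi : n i ≠ 0 then (h ⟨i, hi⟩).1 else i with hg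
  have hgJ : ∀ i (hi : n i ≠ 0), g i = (h ⟨i, hi⟩).1 := by
    intro i hi; rw [hg]; exact dif_pos hi
  have hgZ : ∀ i, n i = 0 → g i = i := by
    intro i hi; rw [hg]; exact dif_neg (by simpa using hi)
  have hfib0 : ∀ j, n j = 0 → g ⁻¹' {j} = {j} := by
    intro j hj
    ext i
    simp only [Set.mem_preimage, Set.mem_singleton_iff]
    constructor
    · intro hi
      by_cases hni : n i ≠ 0
      · rw [hgJ i hni] at hi
        exact absurd (hi ▸ (h ⟨i, hni⟩).2) (by simp [hj])
      · push_neg at hni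
        rwa [hgZ i hni] at hi
    · intro hij; rw [hij]; exact hgZ j hj
  have hfib1 : ∀ j (hj : n j ≠ 0),
      g ⁻¹' {j} = Subtype.val '' (h ⁻¹' {(⟨j, hj⟩ : {i // n i ≠ 0})}) := by
    intro j hj
    ext i
    simp only [Set.mem_preimage, Set.mem_singleton_iff]
    constructor
    · intro hi
      by_cases hni : n i ≠ 0
      · rw [hgJ i hni] at hi
        exact ⟨⟨i, hni⟩, Subtype.ext hi, rfl⟩
      · push_neg at hni
        rw [hgZ i hni] at hi
        exact absurd (hi ▸ hni) hj
    · rintro ⟨⟨i', hi'⟩, hmem, rfl⟩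
      simp only [Set.mem_preimage, Set.mem_singleton_iff] at hmem
      rw [hgJ i' hi', hmem]
  have hhfin : ∀ j : {i // n i ≠ 0}, (h ⁻¹' {j}).Finite := by
    intro j
    by_contra hni
    rw [← Set.not_infinite, not_not] at hni
    have hz := finsum_mem_eq_zero_of_infinite (f := fun x : {i // n i ≠ 0} => n x.1)
      (s := h ⁻¹' {j}) ?_
    · rw [hsums j] at hz
      exact j.2 hz
    · have : h ⁻¹' {j} ∩ Function.support (fun x : {i // n i ≠ 0} => n x.1)
          = h ⁻¹' {j} := by
        apply Set.inter_eq_self_of_subset_left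
        intro x _
        simp only [Function.mem_support]
        exact x.2
      rwa [this]
  refine ⟨g, ?_, ?_, ?_, ?_⟩
  · intro j
    by_cases hj : n j ≠ 0
    · obtain ⟨x, hx⟩ := hsurj ⟨j, hj⟩
      exact ⟨x.1, by rw [hgJ x.1 x.2]; exact congrArg Subtype.val hx⟩
    · push_neg at hj
      exact ⟨j, hgZ j hj⟩
  · intro hinj
    obtain ⟨x, y, hxy, hne⟩ := Function.not_injective_iff.1 hninj
    have : g x.1 = g y.1 := by
      rw [hgJ x.1 x.2, hgJ y.1 y.2]
      exact congrArg Subtype.val (by rw [show (⟨x.1, x.2⟩ : {i // n i ≠ 0}) = x from rfl,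
        show (⟨y.1, y.2⟩ : {i // n i ≠ 0}) = y from rfl, hxy])
    exact hne (Subtype.ext (hinj this))
  · intro j
    by_cases hj : n j = 0
    · rw [hfib0 j hj]; exact Set.finite_singleton j
    · rw [hfib1 j hj]; exact Set.Finite.image _ (hhfin ⟨j, hj⟩)
  · intro j
    by_cases hj : n j = 0
    · rw [hfib0 j hj, finsum_mem_singleton]
    · rw [hfib1 j hj,
        finsum_mem_image (Subtype.val_injective.injOn)]
      exact hsums ⟨j, hj⟩

end Witnesses

/-- For γ a limit ordinal or 0 and naturals n_i with γ + n_i > 0, the disjoint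
union poset ⋃_{i∈I} (γ + n_i) is reversible iff I_γ = {i | n_i = 0} is finite and
⟨n_i : i ∈ I \ I_γ⟩ is a reversible sequence of natural numbers. -/
theorem stmt6 {I : Type*} (γ : Ordinal) (hγ : γ = 0 ∨ Order.IsSuccLimit γ) (n : I → ℕ)
    (hpos : ∀ i, 0 < γ + (n i : Ordinal)) :
    Reversible (Σ i, (γ + (n i : Ordinal)).ToType) ↔
      ({i | n i = 0}.Finite ∧ RevSeqNat (fun i : {i // n i ≠ 0} => n i)) := by
  have hiso : (Σ i, ↥(Iio (γ + (n i : Ordinal)))) ≃o (Σ i, (γ + (n i : Ordinal)).ToType) :=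
    sigmaOrderIso (fun i => Ordinal.ToType.mk)
  constructor
  · intro hrev
    by_contra hcon
    rw [not_and_or] at hcon
    have hrev' : Reversible (Σ i, ↥(Iio (γ + (n i : Ordinal)))) :=
      reversible_of_orderIso hiso.symm hrev
    rcases hcon with hZ | hrs
    · have hZ' : {i | n i = 0}.Infinite := by rwa [← Set.not_infinite, not_not] at hZ
      obtain ⟨g, h1, h2, h3, h4⟩ := witness_of_infinite hZ'
      exact (not_reversible_of_seq_witness hγ hpos h1 h2 h3 h4) hrev'
    · obtain ⟨g, h1, h2, h3, h4⟩ := witness_of_nonrev hrs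
      exact (not_reversible_of_seq_witness hγ hpos h1 h2 h3 h4) hrev'
  · rintro ⟨hZ, hrs⟩
    exact reversible_of_orderIso hiso (reversible_of_conditions hγ hpos hZ hrs)
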